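/- arXiv:1510.03896 — 2 statements merged into one kernel-verified Lean document; each statement's English description precedes it below -/
import Mathlib

section
/- Let (A, E, ε) be a B-B-non-commutative probability space and let χ : {1,…,n} → {ℓ,r} with n ≥ 2. If there exist q ∈ {1,…,n} and b ∈ B such that Z_q = L_b when χ(q) = ℓ, or Z_q = R_b when χ(q) = r, then the full operator-valued bi-free cumulant vanishes: κ^B_χ(Z₁,…,Z_n) = 0 for all Z_k ∈ A_{χ(k)}. -/
open scoped Classical

noncomputable section

/-- A partition of `Fin m` (encoded as a `Setoid`) is non-crossing if there are no
`a < b < c < d` with `a, c` in one block and `b, d` in a different block. -/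
def NonCrossingPart {m : ℕ} (π : Setoid (Fin m)) : Prop :=
  ∀ a b c d : Fin m, a < b → b < c → c < d → π.r a c → π.r b d → π.r a b

/-- The rank of an index in the `≺_χ` order: left indices (`χ = true`) in increasing order
first, followed by right indices (`χ = false`) in decreasing order.  So
`i ≺_χ j ↔ chiRank χ i < chiRank χ j`. -/
def chiRank {n : ℕ} (χ : Fin n → Bool) (i : Fin n) : ℕ :=
  if χ i = true then (Finset.univ.filter fun k : Fin n => χ k = true ∧ k < i).card
  else (Finset.univ.filter fun k : Fin n => χ k = true).card +
    (Finset.univ.filter fun k : Fin n => χ k = false ∧ i < k).card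

/-- `π` is bi-non-crossing with respect to `χ`: it is non-crossing in the `≺_χ` order,
i.e. `s_χ⁻¹ · π` is non-crossing. -/
def IsBNC {n : ℕ} (χ : Fin n → Bool) (π : Setoid (Fin n)) : Prop :=
  ∀ a b c d : Fin n, chiRank χ a < chiRank χ b → chiRank χ b < chiRank χ c →
    chiRank χ c < chiRank χ d → π.r a c → π.r b d → π.r a b

/-- `V` is a `χ`-interval: an interval with respect to the `≺_χ` order. -/
def ChiInterval {n : ℕ} (χ : Fin n → Bool) (V : Finset (Fin n)) : Prop :=
  ∀ x ∈ V, ∀ z ∈ V, ∀ y : Fin n,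
    chiRank χ x ≤ chiRank χ y → chiRank χ y ≤ chiRank χ z → y ∈ V

/-- `V` is a union of blocks of `π`. -/
def UnionOfBlocks {n : ℕ} (π : Setoid (Fin n)) (V : Finset (Fin n)) : Prop :=
  ∀ x ∈ V, ∀ y : Fin n, π.r x y → y ∈ V

/-- The increasing enumeration of `V ⊆ Fin n`, used to restrict tuples/partitions to `V`. -/
def restFin {n : ℕ} (V : Finset (Fin n)) : Fin V.card → Fin n :=
  fun a => ((V.orderIsoOfFin rfl) a).1

/-- A `B`-`B`-non-commutative probability space: a unital algebra `A`, a pair of commuting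
injective unital homomorphisms `L : B → A` and `R : Bᵐᵒᵖ → A` (encoding
`ε : B ⊗ B^op → A`, `L_b = ε(b⊗1)`, `R_b = ε(1⊗b)`), and a linear map `E : A → B` with
`E(ε(b₁⊗b₂)Z) = b₁ E(Z) b₂` and `E(Z L_b) = E(Z R_b)`. -/
structure BBNCPS (B : Type) [Ring B] [Algebra ℂ B] : Type 1 where
  A : Type
  [ringA : Ring A]
  [algA : Algebra ℂ A]
  L : B →ₐ[ℂ] A
  R : Bᵐᵒᵖ →ₐ[ℂ] A
  comm : ∀ (b₁ : B) (b₂ : Bᵐᵒᵖ), L b₁ * R b₂ = R b₂ * L b₁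
  Linj : Function.Injective L
  Rinj : Function.Injective R
  E : A →ₗ[ℂ] B
  E_mul : ∀ (b₁ b₂ : B) (Z : A), E (L b₁ * R (MulOpposite.op b₂) * Z) = b₁ * E Z * b₂
  E_swap : ∀ (Z : A) (b : B), E (Z * L b) = E (Z * R (MulOpposite.op b))

attribute [instance] BBNCPS.ringA BBNCPS.algA

variable {B : Type} [Ring B] [Algebra ℂ B]

/-- The tuple `Z` is compatible with the side function `χ`: entries with `χ k = ℓ` lie in
the left algebra `A_ℓ` (they commute with all `R_b`), entries with `χ k = r` lie in the
right algebra `A_r` (they commute with all `L_b`). -/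
def SideOK (P : BBNCPS B) {n : ℕ} (χ : Fin n → Bool) (Z : Fin n → P.A) : Prop :=
  ∀ k : Fin n,
    (χ k = true → ∀ b : B, Z k * P.R (MulOpposite.op b) = P.R (MulOpposite.op b) * Z k) ∧
    (χ k = false → ∀ b : B, Z k * P.L b = P.L b * Z k)

/-- `Eb` agrees with the moment function on full partitions:
`E^B_{1_χ}(Z₁,…,Z_n) = E(Z₁⋯Z_n)`. -/
def AnchorsTop (P : BBNCPS B)
    (Eb : (n : ℕ) → (Fin n → Bool) → Setoid (Fin n) → (Fin n → P.A) → B) : Prop :=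
  ∀ (n : ℕ) (χ : Fin n → Bool) (Z : Fin n → P.A),
    Eb n χ ⊤ Z = P.E (((List.finRange n).map Z).prod)

/-- Bi-multiplicativity, property (3): if `V₁,…,V_m` are unions of blocks of `π` and
`χ`-intervals partitioning `{1,…,n}`, ordered by `≺_χ`, then
`E^B_π(Z) = E^B_{π|V₁}(Z|V₁) ⋯ E^B_{π|V_m}(Z|V_m)`. -/
def FactorsOverIntervals (P : BBNCPS B)
    (Eb : (n : ℕ) → (Fin n → Bool) → Setoid (Fin n) → (Fin n → P.A) → B) : Prop :=
  ∀ (n : ℕ) (χ : Fin n → Bool) (π : Setoid (Fin n)) (Z : Fin n → P.A),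
    SideOK P χ Z → IsBNC χ π →
    ∀ (m : ℕ) (Vs : Fin m → Finset (Fin n)),
      (∀ k : Fin n, ∃! i : Fin m, k ∈ Vs i) →
      (∀ i, (Vs i).Nonempty) →
      (∀ i, UnionOfBlocks π (Vs i)) →
      (∀ i, ChiInterval χ (Vs i)) →
      (∀ i j : Fin m, i < j → ∀ x ∈ Vs i, ∀ y ∈ Vs j, chiRank χ x < chiRank χ y) →
      Eb n χ π Z =
        ((List.finRange m).map fun i =>
          Eb (Vs i).card (χ ∘ restFin (Vs i)) (Setoid.comap (restFin (Vs i)) π)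
            (Z ∘ restFin (Vs i))).prod

/-- Bi-multiplicativity, property (4): if `V, W` are unions of blocks of `π` partitioning
`{1,…,n}`, `V` is a `χ`-interval, the `≺_χ`-minimum and `≺_χ`-maximum lie in `W`, and `p`
is the `≺_χ`-largest element of `W` preceding `V`, then `E^B_π(Z)` is obtained by evaluating
`E^B_{π|V}(Z|V)`, multiplying it into position `p` (as `Z_p L_{·}` if `χ(p) = ℓ`, as
`R_{·} Z_p` if `χ(p) = r`), and applying `E^B_{π|W}` to the resulting restricted tuple. -/
def NestsOverIntervals (P : BBNCPS B)
    (Eb : (n : ℕ) → (Fin n → Bool) → Setoid (Fin n) → (Fin n → P.A) → B) : Prop :=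
  ∀ (n : ℕ) (χ : Fin n → Bool) (π : Setoid (Fin n)) (Z : Fin n → P.A),
    SideOK P χ Z → IsBNC χ π →
    ∀ (V W : Finset (Fin n)), V.Nonempty → W.Nonempty → Disjoint V W →
      V ∪ W = Finset.univ → UnionOfBlocks π V → UnionOfBlocks π W → ChiInterval χ V →
      (∃ w ∈ W, ∀ v ∈ V, chiRank χ v < chiRank χ w) →
      ∀ p : Fin n, p ∈ W → (∀ v ∈ V, chiRank χ p < chiRank χ v) →
        (∀ w ∈ W, (∀ v ∈ V, chiRank χ w < chiRank χ v) → chiRank χ w ≤ chiRank χ p) →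
        Eb n χ π Z =
          Eb W.card (χ ∘ restFin W) (Setoid.comap (restFin W) π)
            ((Function.update Z p
              (if χ p then
                Z p * P.L (Eb V.card (χ ∘ restFin V) (Setoid.comap (restFin V) π)
                  (Z ∘ restFin V))
               else
                P.R (MulOpposite.op (Eb V.card (χ ∘ restFin V)
                  (Setoid.comap (restFin V) π) (Z ∘ restFin V))) * Z p)) ∘ restFin W)

/-- `μ` is the bi-non-crossing Möbius function: it vanishes on non-refinements and
satisfies the defining recursions on each lattice `BNC(χ)`. -/
def MoebiusBNC (μ : (n : ℕ) → (Fin n → Bool) → Setoid (Fin n) → Setoid (Fin n) → ℂ) :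
    Prop :=
  (∀ (n : ℕ) (χ : Fin n → Bool) (π σ : Setoid (Fin n)), ¬ π ≤ σ → μ n χ π σ = 0) ∧
  (∀ (n : ℕ) (χ : Fin n → Bool) (π σ : Setoid (Fin n)),
    IsBNC χ π → IsBNC χ σ → π ≤ σ →
    (∑ᶠ τ ∈ {τ : Setoid (Fin n) | IsBNC χ τ ∧ π ≤ τ ∧ τ ≤ σ}, μ n χ τ σ)
      = if π = σ then 1 else 0) ∧
  (∀ (n : ℕ) (χ : Fin n → Bool) (π σ : Setoid (Fin n)),
    IsBNC χ π → IsBNC χ σ → π ≤ σ →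
    (∑ᶠ τ ∈ {τ : Setoid (Fin n) | IsBNC χ τ ∧ π ≤ τ ∧ τ ≤ σ}, μ n χ π τ)
      = if π = σ then 1 else 0)


/-! ### Infrastructure -/

section Infra

variable {n : ℕ}

instance setoidFinite : Finite (Setoid (Fin n)) :=
  Finite.of_injective (fun σ => (σ : Fin n → Fin n → Prop))
    (fun a b h => Setoid.ext fun x y => iff_of_eq (congrFun (congrFun h x) y))

noncomputable instance setoidFintype : Fintype (Setoid (Fin n)) := Fintype.ofFinite _

/-- characterization of the `≺_χ` order -/
lemma chiRank_lt_iff (χ : Fin n → Bool) {x y : Fin n} :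
    chiRank χ x < chiRank χ y ↔
      ((χ x = true ∧ χ y = true ∧ x < y) ∨ (χ x = false ∧ χ y = false ∧ y < x) ∨
        (χ x = true ∧ χ y = false)) := by
  have hmonoL : ∀ u v : Fin n, χ u = true → u < v →
      (Finset.univ.filter fun k : Fin n => χ k = true ∧ k < u).card <
      (Finset.univ.filter fun k : Fin n => χ k = true ∧ k < v).card := by
    intro u v hu huv
    apply Finset.card_lt_card
    rw [Finset.ssubset_iff_of_subset]
    · exact ⟨u, by simp [hu, huv], by simp⟩
    · intro k hk; simp only [Finset.mem_filter, Finset.mem_univ, true_and] at hk ⊢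
      exact ⟨hk.1, hk.2.trans huv⟩
  have hmonoR : ∀ u v : Fin n, χ v = false → u < v →
      (Finset.univ.filter fun k : Fin n => χ k = false ∧ v < k).card <
      (Finset.univ.filter fun k : Fin n => χ k = false ∧ u < k).card := by
    intro u v hv huv
    apply Finset.card_lt_card
    rw [Finset.ssubset_iff_of_subset]
    · exact ⟨v, by simp [hv, huv], by simp⟩
    · intro k hk; simp only [Finset.mem_filter, Finset.mem_univ, true_and] at hk ⊢
      exact ⟨hk.1, huv.trans hk.2⟩
  have hL : ∀ u : Fin n, χ u = true →
      (Finset.univ.filter fun k : Fin n => χ k = true ∧ k < u).card <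
      (Finset.univ.filter fun k : Fin n => χ k = true).card := by
    intro u hu
    apply Finset.card_lt_card
    rw [Finset.ssubset_iff_of_subset]
    · exact ⟨u, by simp [hu], by simp⟩
    · intro k hk; simp only [Finset.mem_filter, Finset.mem_univ, true_and] at hk ⊢
      exact hk.1
  unfold chiRank
  cases hx : χ x <;> cases hy : χ y <;> simp
  · -- false false
    constructor
    · intro h
      rcases lt_trichotomy x y with h1 | h1 | h1
      · exact absurd (hmonoR x y hy h1) (by omega)
      · exact absurd h1 (by subst h1; omega)
      · exact h1
    · intro h1; exact hmonoR y x hx h1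
  · -- false true
    exact le_trans (le_of_lt (hL y hy)) (Nat.le_add_right _ _)
  · -- true false
    exact lt_of_lt_of_le (hL x hx) (Nat.le_add_right _ _)
  · -- true true
    constructor
    · intro h
      rcases lt_trichotomy x y with h1 | h1 | h1
      · exact h1
      · exact absurd h1 (by subst h1; omega)
      · exact absurd (hmonoL y x hy h1) (by omega)
    · intro h1; exact hmonoL x y hx h1

lemma chiRank_injective (χ : Fin n → Bool) : Function.Injective (chiRank χ) := by
  intro x y h
  by_contra hne
  have h1 : ¬ chiRank χ x < chiRank χ y := by omega
  have h2 : ¬ chiRank χ y < chiRank χ x := by omega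
  rw [chiRank_lt_iff] at h1 h2
  cases hx : χ x <;> cases hy : χ y
  · rcases lt_trichotomy x y with hc | hc | hc
    · exact h2 (Or.inr (Or.inl ⟨hy, hx, hc⟩))
    · exact hne hc
    · exact h1 (Or.inr (Or.inl ⟨hx, hy, hc⟩))
  · exact h2 (Or.inr (Or.inr ⟨hy, hx⟩))
  · exact h1 (Or.inr (Or.inr ⟨hx, hy⟩))
  · rcases lt_trichotomy x y with hc | hc | hc
    · exact h1 (Or.inl ⟨hx, hy, hc⟩)
    · exact hne hc
    · exact h2 (Or.inl ⟨hy, hx, hc⟩)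

/-! ### restFin -/

lemma restFin_strictMono (V : Finset (Fin n)) : StrictMono (restFin V) := by
  intro a b h
  exact (V.orderIsoOfFin rfl).strictMono h

lemma restFin_mem (V : Finset (Fin n)) (a : Fin V.card) : restFin V a ∈ V :=
  ((V.orderIsoOfFin rfl) a).2

lemma restFin_surj (V : Finset (Fin n)) {x : Fin n} (hx : x ∈ V) :
    ∃ a, restFin V a = x :=
  ⟨(V.orderIsoOfFin rfl).symm ⟨x, hx⟩, by
    simp only [restFin, OrderIso.apply_symm_apply]⟩

lemma restFin_inj (V : Finset (Fin n)) : Function.Injective (restFin V) :=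
  (restFin_strictMono V).injective

/-- the increasing enumeration of `V` is the filtered `finRange`. -/
lemma restFin_enum (V : Finset (Fin n)) :
    (List.finRange V.card).map (restFin V) =
      (List.finRange n).filter (fun k => k ∈ V) := by
  refine (fun hp h1 h2 => List.Perm.eq_of_pairwise' (r := (· ≤ ·)) h1 h2 hp) ?_ ?_ ?_
  · rw [List.perm_ext_iff_of_nodup]
    · intro a
      simp only [List.mem_map, List.mem_finRange, true_and, List.mem_filter,
        decide_eq_true_eq]
      constructor
      · rintro ⟨b, rfl⟩
        exact restFin_mem V b
      · intro ha
        exact restFin_surj V ha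
    · exact (List.nodup_finRange _).map (restFin_inj V)
    · exact (List.nodup_finRange _).filter _
  · exact List.Pairwise.map _ (fun _ _ h => le_of_lt ((restFin_strictMono V) h))
      (List.pairwise_lt_finRange _)
  · exact List.Pairwise.filter _ ((List.pairwise_lt_finRange n).imp le_of_lt)

/-- splitting a sorted list at an element -/
lemma sorted_split : ∀ {l : List (Fin n)} {q : Fin n}, l.Pairwise (· < ·) → q ∈ l →
    l = l.filter (fun k => k < q) ++ q :: l.filter (fun k => q < k) := by
  intro l
  induction l with
  | nil => intro q _ h; simp at h
  | cons a t ih =>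
    intro q hs hq
    rw [List.pairwise_cons] at hs
    rcases List.mem_cons.1 hq with rfl | hq
    · have h1 : (q :: t).filter (fun k => k < q) = [] := by
        rw [List.filter_eq_nil_iff]
        intro k hk
        rcases List.mem_cons.1 hk with rfl | hk
        · simp
        · simp only [decide_eq_true_eq]; exact not_lt.2 (le_of_lt (hs.1 k hk))
      have h2 : (q :: t).filter (fun k => q < k) = t := by
        rw [List.filter_cons_of_neg (by simp)]
        rw [List.filter_eq_self]
        intro k hk; simp only [decide_eq_true_eq]; exact hs.1 k hk
      rw [h1, h2]; rfl
    · have haq : a < q := hs.1 q hq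
      rw [List.filter_cons_of_pos (by simpa using haq),
        List.filter_cons_of_neg (by simp [not_lt.2 (le_of_lt haq)]),
        List.cons_append]
      congr 1
      exact ih hs.2 hq

end Infra

section SetoidSurgery

variable {n : ℕ}

lemma setoid_top_rel {α : Type} (x y : α) : (⊤ : Setoid α).r x y := by
  have h : ((⊤ : Setoid α) : α → α → Prop) x y := by rw [Setoid.top_def]; trivial
  exact h

/-- remove `q` from its block -/
def delS (q : Fin n) (σ : Setoid (Fin n)) : Setoid (Fin n) where
  r x y := x = y ∨ (x ≠ q ∧ y ≠ q ∧ σ.r x y)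
  iseqv := by
    refine ⟨fun x => Or.inl rfl, ?_, ?_⟩
    · rintro x y (rfl | ⟨hx, hy, h⟩)
      · exact Or.inl rfl
      · exact Or.inr ⟨hy, hx, σ.symm h⟩
    · rintro x y z (rfl | ⟨hx, hy, h⟩) h2
      · exact h2
      · rcases h2 with rfl | ⟨hy', hz, h'⟩
        · exact Or.inr ⟨hx, hy, h⟩
        · exact Or.inr ⟨hx, hz, σ.trans h h'⟩

lemma delS_rel {q : Fin n} {σ : Setoid (Fin n)} {x y : Fin n} :
    (delS q σ).r x y ↔ x = y ∨ (x ≠ q ∧ y ≠ q ∧ σ.r x y) := Iff.rfl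

lemma delS_le {q : Fin n} {σ : Setoid (Fin n)} : delS q σ ≤ σ := by
  rw [Setoid.le_def]
  rintro x y (rfl | ⟨_, _, h⟩)
  · exact σ.refl x
  · exact h

lemma delS_idem {q : Fin n} {σ : Setoid (Fin n)} : delS q (delS q σ) = delS q σ := by
  apply Setoid.ext
  intro x y
  show (delS q (delS q σ)).r x y ↔ (delS q σ).r x y
  rw [delS_rel]
  constructor
  · rintro (rfl | ⟨hx, hy, h⟩)
    · exact Or.inl rfl
    · exact h
  · rintro (rfl | ⟨hx, hy, h⟩)
    · exact Or.inl rfl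
    · exact Or.inr ⟨hx, hy, Or.inr ⟨hx, hy, h⟩⟩

/-- a fixed point of `delS q` relates `q` to nothing else -/
lemma delS_fixed_rel {q : Fin n} {τ : Setoid (Fin n)} (hfix : delS q τ = τ)
    {x y : Fin n} (h : τ.r x y) (hne : x ≠ y) : x ≠ q ∧ y ≠ q := by
  rw [← hfix] at h
  rcases h with rfl | ⟨hx, hy, _⟩
  · exact absurd rfl hne
  · exact ⟨hx, hy⟩

lemma delS_top_ne_top (q : Fin n) (hn : 2 ≤ n) : delS q (⊤ : Setoid (Fin n)) ≠ ⊤ := by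
  have : Nontrivial (Fin n) := ⟨⟨⟨0, by omega⟩, ⟨1, by omega⟩, by simp [Fin.ext_iff]⟩⟩
  obtain ⟨x, hx⟩ := exists_ne q
  intro h
  have h2 : (delS q (⊤ : Setoid (Fin n))).r q x := by
    rw [h]
    exact setoid_top_rel q x
  rcases h2 with h2 | ⟨h2, _, _⟩
  · exact hx h2.symm
  · exact h2 rfl

lemma delS_isBNC {q : Fin n} {χ : Fin n → Bool} {σ : Setoid (Fin n)} (hσ : IsBNC χ σ) :
    IsBNC χ (delS q σ) := by
  intro a b c d h1 h2 h3 hac hbd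
  have hane : a ≠ c := fun h => by subst h; omega
  have hbne : b ≠ d := fun h => by subst h; omega
  rcases hac with h | ⟨ha, hc, hac⟩
  · exact absurd h hane
  rcases hbd with h | ⟨hb, hd, hbd⟩
  · exact absurd h hbne
  exact Or.inr ⟨ha, hb, hσ a b c d h1 h2 h3 hac hbd⟩

lemma delS_fixed_le_iff {q : Fin n} {τ σ : Setoid (Fin n)} (hfix : delS q τ = τ) :
    τ ≤ σ ↔ τ ≤ delS q σ := by
  constructor
  · intro h
    rw [Setoid.le_def]
    intro x y hxy
    by_cases hne : x = y
    · exact Or.inl hne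
    · obtain ⟨hx, hy⟩ := delS_fixed_rel hfix hxy hne
      exact Or.inr ⟨hx, hy, Setoid.le_def.1 h hxy⟩
  · intro h
    exact le_trans h delS_le

lemma comap_delS_not_mem {q : Fin n} {V : Finset (Fin n)} (hq : q ∉ V)
    (σ : Setoid (Fin n)) :
    Setoid.comap (restFin V) (delS q σ) = Setoid.comap (restFin V) σ := by
  apply Setoid.ext
  intro x y
  show (delS q σ).r _ _ ↔ σ.r _ _
  rw [delS_rel]
  constructor
  · rintro (h | ⟨_, _, h⟩)
    · exact h ▸ σ.refl _
    · exact h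
  · intro h
    exact Or.inr ⟨fun he => hq (he ▸ restFin_mem V x), fun he => hq (he ▸ restFin_mem V y), h⟩

lemma comap_delS_mem {q : Fin n} {V : Finset (Fin n)} {a : Fin V.card}
    (ha : restFin V a = q) (σ : Setoid (Fin n)) :
    Setoid.comap (restFin V) (delS q σ) = delS a (Setoid.comap (restFin V) σ) := by
  apply Setoid.ext
  intro x y
  show (delS q σ).r _ _ ↔ (delS a _).r x y
  rw [delS_rel, delS_rel]
  constructor
  · rintro (h | ⟨hx, hy, h⟩)
    · exact Or.inl (restFin_inj V h)
    · exact Or.inr ⟨fun he => hx (he ▸ ha), fun he => hy (he ▸ ha), h⟩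
  · rintro (rfl | ⟨hx, hy, h⟩)
    · exact Or.inl rfl
    · exact Or.inr ⟨fun he => hx (restFin_inj V (he.trans ha.symm)),
        fun he => hy (restFin_inj V (he.trans ha.symm)), h⟩

lemma comap_isBNC {χ : Fin n → Bool} {σ : Setoid (Fin n)} (hσ : IsBNC χ σ)
    (V : Finset (Fin n)) :
    IsBNC (χ ∘ restFin V) (Setoid.comap (restFin V) σ) := by
  have hrank : ∀ a b : Fin V.card,
      chiRank (χ ∘ restFin V) a < chiRank (χ ∘ restFin V) b ↔
        chiRank χ (restFin V a) < chiRank χ (restFin V b) := by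
    intro a b
    rw [chiRank_lt_iff, chiRank_lt_iff]
    simp only [Function.comp_apply, (restFin_strictMono V).lt_iff_lt]
  intro a b c d h1 h2 h3 hac hbd
  rw [hrank] at h1 h2 h3
  exact hσ _ _ _ _ h1 h2 h3 hac hbd

lemma isBNC_top {χ : Fin n → Bool} : IsBNC χ (⊤ : Setoid (Fin n)) := by
  intro a b c d _ _ _ _ _
  exact setoid_top_rel a b

lemma comap_top (V : Finset (Fin n)) :
    Setoid.comap (restFin V) (⊤ : Setoid (Fin n)) = (⊤ : Setoid (Fin V.card)) := by
  apply Setoid.ext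
  intro x y
  constructor
  · intro _; exact setoid_top_rel x y
  · intro _; exact setoid_top_rel _ _

end SetoidSurgery

section EBasics

variable {B : Type} [Ring B] [Algebra ℂ B] (P : BBNCPS B)

lemma E_one (Eb : (n : ℕ) → (Fin n → Bool) → Setoid (Fin n) → (Fin n → P.A) → B)
    (hTop : AnchorsTop P Eb) (hFac : FactorsOverIntervals P Eb) : P.E 1 = 1 := by
  have h1 := hFac 0 Fin.elim0 ⊤ Fin.elim0 (fun k => k.elim0) (fun a => a.elim0)
    0 Fin.elim0 (fun k => k.elim0) (fun i => i.elim0) (fun i => i.elim0)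
    (fun i => i.elim0) (fun i j h => i.elim0)
  have h2 := hTop 0 Fin.elim0 Fin.elim0
  simp only [List.finRange_zero, List.map_nil, List.prod_nil] at h1 h2
  rw [h2] at h1
  simpa using h1

lemma setoid_fin_one (σ : Setoid (Fin 1)) : σ = ⊤ := by
  apply Setoid.ext
  intro x y
  have hxy : x = y := Subsingleton.elim x y
  subst hxy
  exact ⟨fun _ => setoid_top_rel x x, fun _ => σ.refl x⟩

lemma Eb_single (Eb : (n : ℕ) → (Fin n → Bool) → Setoid (Fin n) → (Fin n → P.A) → B)
    (hTop : AnchorsTop P Eb) (χ : Fin 1 → Bool) (σ : Setoid (Fin 1)) (Z : Fin 1 → P.A) :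
    Eb 1 χ σ Z = P.E (Z 0) := by
  rw [setoid_fin_one σ, hTop 1 χ Z]
  congr 1
  simp [List.finRange_succ]

lemma R_op_one : P.R (MulOpposite.op (1 : B)) = 1 := by
  rw [MulOpposite.op_one, map_one]

lemma E_Lmul (b : B) (X : P.A) : P.E (P.L b * X) = b * P.E X := by
  have := P.E_mul b 1 X
  rw [R_op_one, mul_one] at this
  rw [this, mul_one]

lemma E_Rmul (b : B) (X : P.A) : P.E (P.R (MulOpposite.op b) * X) = P.E X * b := by
  have := P.E_mul 1 b X
  rw [map_one, one_mul, one_mul] at this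
  exact this

lemma E_L (hE1 : P.E 1 = 1) (b : B) : P.E (P.L b) = b := by
  have := E_Lmul P b 1
  rw [mul_one, hE1, mul_one] at this
  exact this

lemma E_R (hE1 : P.E 1 = 1) (b : B) : P.E (P.R (MulOpposite.op b)) = b := by
  have := E_Rmul P b 1
  rw [mul_one, hE1, one_mul] at this
  exact this

/-- value at `q`: `E (Z q) = b` -/
lemma E_Zq (hE1 : P.E 1 = 1) {n : ℕ} {χ : Fin n → Bool} {Z : Fin n → P.A} {q : Fin n}
    {b : B} (hq : (χ q = true ∧ Z q = P.L b) ∨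
      (χ q = false ∧ Z q = P.R (MulOpposite.op b))) : P.E (Z q) = b := by
  rcases hq with ⟨-, h⟩ | ⟨-, h⟩
  · rw [h]; exact E_L P hE1 b
  · rw [h]; exact E_R P hE1 b

/-- commutation for sliding -/
lemma commute_L {n : ℕ} {χ : Fin n → Bool} {Z : Fin n → P.A} (hZ : SideOK P χ Z)
    (b : B) {l : List (Fin n)} (hl : ∀ k ∈ l, χ k = false) :
    Commute (P.L b) ((l.map Z).prod) := by
  apply Commute.list_prod_right
  intro x hx
  rw [List.mem_map] at hx
  obtain ⟨k, hk, rfl⟩ := hx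
  exact ((hZ k).2 (hl k hk) b).symm

lemma commute_R {n : ℕ} {χ : Fin n → Bool} {Z : Fin n → P.A} (hZ : SideOK P χ Z)
    (b : B) {l : List (Fin n)} (hl : ∀ k ∈ l, χ k = true) :
    Commute (P.R (MulOpposite.op b)) ((l.map Z).prod) := by
  apply Commute.list_prod_right
  intro x hx
  rw [List.mem_map] at hx
  obtain ⟨k, hk, rfl⟩ := hx
  exact ((hZ k).1 (hl k hk) b).symm

/-- SideOK for restricted tuple -/
lemma sideOK_rest {n : ℕ} {χ : Fin n → Bool} {Z : Fin n → P.A} (hZ : SideOK P χ Z)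
    (V : Finset (Fin n)) : SideOK P (χ ∘ restFin V) (Z ∘ restFin V) :=
  fun k => hZ (restFin V k)

/-- SideOK for updated tuple -/
lemma sideOK_update {n : ℕ} {χ : Fin n → Bool} {Z : Fin n → P.A} (hZ : SideOK P χ Z)
    (p : Fin n) (β : B) :
    SideOK P χ (Function.update Z p
      (if χ p then Z p * P.L β else P.R (MulOpposite.op β) * Z p)) := by
  intro k
  by_cases hk : k = p
  · subst hk
    rw [Function.update_self]
    constructor
    · intro hχ c
      rw [if_pos hχ]
      have h1 : Commute (Z k) (P.R (MulOpposite.op c)) := (hZ k).1 hχ c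
      have h2 : Commute (P.L β) (P.R (MulOpposite.op c)) := P.comm β (MulOpposite.op c)
      exact h1.mul_left h2
    · intro hχ c
      rw [if_neg (by simp [hχ])]
      have h1 : Commute (Z k) (P.L c) := (hZ k).2 hχ c
      have h2 : Commute (P.R (MulOpposite.op β)) (P.L c) := (P.comm c (MulOpposite.op β)).symm
      exact h2.mul_left h1
  · rw [Function.update_of_ne hk]
    exact hZ k

end EBasics

section ListHelpers

variable {n : ℕ}

lemma finRange_sorted : (List.finRange n).Pairwise (· < ·) := List.pairwise_lt_finRange n

lemma finRange_split (q : Fin n) :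
    List.finRange n = ((List.finRange n).filter (fun k => k < q)) ++
      q :: ((List.finRange n).filter (fun k => q < k)) :=
  sorted_split finRange_sorted (List.mem_finRange q)

lemma mem_filter_lt {q x : Fin n} (h : x ∈ (List.finRange n).filter (fun k => k < q)) :
    x < q := by
  rw [List.mem_filter] at h; exact of_decide_eq_true h.2

lemma mem_filter_gt {q x : Fin n} (h : x ∈ (List.finRange n).filter (fun k => q < k)) :
    q < x := by
  rw [List.mem_filter] at h; exact of_decide_eq_true h.2

lemma filter_ne_split (q : Fin n) :
    (List.finRange n).filter (fun k => k ≠ q) =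
      ((List.finRange n).filter (fun k => k < q)) ++
        ((List.finRange n).filter (fun k => q < k)) := by
  conv_lhs => rw [finRange_split q]
  rw [List.filter_append, List.filter_cons_of_neg (by simp)]
  congr 1
  · apply List.filter_eq_self.2
    intro a ha
    simpa using (mem_filter_lt ha).ne
  · apply List.filter_eq_self.2
    intro a ha
    simpa using (mem_filter_gt ha).ne'

lemma filter_mem_erase (q : Fin n) :
    (List.finRange n).filter (fun k => k ∈ Finset.univ.erase q) =
      (List.finRange n).filter (fun k => k ≠ q) := by
  apply List.filter_congr
  intro a _
  simp [Finset.mem_erase]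

lemma prod_split {M : Type} [Monoid M] (Z : Fin n → M) {l l₁ l₂ : List (Fin n)} {x : Fin n}
    (h : l = l₁ ++ x :: l₂) :
    (l.map Z).prod = (l₁.map Z).prod * Z x * (l₂.map Z).prod := by
  subst h
  rw [List.map_append, List.prod_append, List.map_cons, List.prod_cons, mul_assoc]

lemma finRange_two_prod {M : Type} [Monoid M] (f : Fin 2 → M) :
    ((List.finRange 2).map f).prod = f 0 * f 1 := by
  simp [List.finRange_succ]

lemma map_update_of_not_mem {M : Type} (Z : Fin n → M) {p : Fin n} {c : M}
    {l : List (Fin n)} (hl : p ∉ l) : l.map (Function.update Z p c) = l.map Z := by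
  apply List.map_congr_left
  intro a ha
  have : a ≠ p := fun h => hl (h ▸ ha)
  exact Function.update_of_ne this _ _

lemma prod_rest {M : Type} (V : Finset (Fin n)) (Z : Fin n → M) :
    (List.finRange V.card).map (Z ∘ restFin V) =
      ((List.finRange n).filter (fun k => k ∈ V)).map Z := by
  rw [← restFin_enum, List.map_map]

end ListHelpers

section TopCase

lemma setoid_subsingleton {α : Type} [Subsingleton α] (σ : Setoid α) : σ = ⊤ := by
  apply Setoid.ext
  intro x y
  have hxy : x = y := Subsingleton.elim x y
  subst hxy
  exact ⟨fun _ => setoid_top_rel x x, fun _ => σ.refl x⟩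

lemma slide_mid {M : Type} [Monoid M] (y u w : M) (h : u * y = y * u) :
    y * (u * w) = u * (y * w) := by
  rw [← mul_assoc, ← h, mul_assoc]

variable {B : Type} [Ring B] [Algebra ℂ B] (P : BBNCPS B)

lemma Eb_of_singleton (Eb : (n : ℕ) → (Fin n → Bool) → Setoid (Fin n) → (Fin n → P.A) → B)
    (hTop : AnchorsTop P Eb) {n : ℕ} (χ : Fin n → Bool) (Z : Fin n → P.A) (x : Fin n)
    (σ : Setoid (Fin ({x} : Finset (Fin n)).card)) :
    Eb ({x} : Finset (Fin n)).card (χ ∘ restFin {x}) σ (Z ∘ restFin {x}) = P.E (Z x) := by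
  haveI hsub : Subsingleton (Fin ({x} : Finset (Fin n)).card) := by
    rw [Finset.card_singleton]; infer_instance
  rw [setoid_subsingleton σ, hTop _ _ _, prod_rest]
  congr 1
  have h1 : (List.finRange n).filter (fun k => k ∈ ({x} : Finset (Fin n))) =
      (List.finRange n).filter (fun k => k = x) := by
    apply List.filter_congr; intro a _; simp
  have h2 : (List.finRange n).filter (fun k => k = x) = [x] := by
    rw [List.filter_eq, List.count_eq_one_of_mem (List.nodup_finRange n) (List.mem_finRange x)]
    rfl
  rw [h1, h2]
  simp

lemma top_case (Eb : (n : ℕ) → (Fin n → Bool) → Setoid (Fin n) → (Fin n → P.A) → B)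
    (hTop : AnchorsTop P Eb) (hFac : FactorsOverIntervals P Eb)
    (hNest : NestsOverIntervals P Eb) {n : ℕ} (χ : Fin n → Bool) (Z : Fin n → P.A)
    (hZ : SideOK P χ Z) (q : Fin n) (b : B)
    (hq : (χ q = true ∧ Z q = P.L b) ∨ (χ q = false ∧ Z q = P.R (MulOpposite.op b))) :
    Eb n χ ⊤ Z = Eb n χ (delS q ⊤) Z := by
  have hE1 : P.E 1 = 1 := E_one P Eb hTop hFac
  by_cases hall : ∀ x : Fin n, x = q
  · have hdel : delS q (⊤ : Setoid (Fin n)) = ⊤ := by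
      apply Setoid.ext
      intro x y
      have hxy : x = y := (hall x).trans (hall y).symm
      subst hxy
      exact ⟨fun _ => setoid_top_rel _ _, fun _ => Or.inl rfl⟩
    rw [hdel]
  push_neg at hall
  obtain ⟨x₀, hx₀⟩ := hall
  have hqU : q ∉ Finset.univ.erase q := Finset.notMem_erase q _
  have hmemU : ∀ x : Fin n, x ∈ Finset.univ.erase q ↔ x ≠ q := by
    intro x; simp [Finset.mem_erase]
  have hUne : (Finset.univ.erase q).Nonempty := ⟨x₀, (hmemU x₀).2 hx₀⟩
  have hBNCdel : IsBNC χ (delS q (⊤ : Setoid (Fin n))) := delS_isBNC isBNC_top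
  have hblockq : UnionOfBlocks (delS q (⊤ : Setoid (Fin n))) {q} := by
    intro x hx y hxy
    rw [Finset.mem_singleton] at hx; subst hx
    rcases hxy with rfl | ⟨hx', _, _⟩
    · exact Finset.mem_singleton_self _
    · exact absurd rfl hx'
  have hblockU : UnionOfBlocks (delS q (⊤ : Setoid (Fin n))) (Finset.univ.erase q) := by
    intro x hx y hxy
    rcases hxy with rfl | ⟨_, hy, _⟩
    · exact hx
    · exact (hmemU y).2 hy
  have hintq : ChiInterval χ ({q} : Finset (Fin n)) := by
    intro x hx z hz y h1 h2
    rw [Finset.mem_singleton] at hx hz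
    rw [hx] at h1
    rw [hz] at h2
    rw [Finset.mem_singleton]
    exact chiRank_injective χ (le_antisymm h2 h1)
  rw [hTop n χ Z]
  by_cases hmin : ∀ y : Fin n, y ≠ q → chiRank χ q < chiRank χ y
  · -- q is the ≺χ-minimum: factor as {q} · rest
    have hcover : ∀ k : Fin n,
        ∃! i : Fin 2, k ∈ (![{q}, Finset.univ.erase q] : Fin 2 → Finset (Fin n)) i := by
      intro k
      by_cases hk : k = q
      · subst hk
        refine ⟨0, Finset.mem_singleton_self k, ?_⟩
        rw [Fin.forall_fin_two]
        refine ⟨fun _ => rfl, fun hi => ?_⟩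
        simp only [Matrix.cons_val_one, Matrix.head_cons, Matrix.cons_val_zero] at hi
        exact absurd ((hmemU _).1 hi) (fun h => h rfl)
      · refine ⟨1, by simp [hmemU, hk], ?_⟩
        rw [Fin.forall_fin_two]
        refine ⟨fun hi => ?_, fun _ => rfl⟩
        simp only [Matrix.cons_val_zero, Finset.mem_singleton] at hi
        exact absurd hi hk
    have hnei : ∀ i : Fin 2,
        ((![{q}, Finset.univ.erase q] : Fin 2 → Finset (Fin n)) i).Nonempty := by
      rw [Fin.forall_fin_two]
      exact ⟨⟨q, Finset.mem_singleton_self q⟩, hUne⟩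
    have hblocks : ∀ i : Fin 2,
        UnionOfBlocks (delS q (⊤ : Setoid (Fin n))) ((![{q}, Finset.univ.erase q]) i) := by
      rw [Fin.forall_fin_two]
      exact ⟨hblockq, hblockU⟩
    have hints : ∀ i : Fin 2, ChiInterval χ ((![{q}, Finset.univ.erase q]) i) := by
      rw [Fin.forall_fin_two]
      refine ⟨hintq, ?_⟩
      intro x hx z hz y h1 h2
      simp only [Matrix.cons_val_one, Matrix.head_cons, Matrix.cons_val_zero] at hx hz ⊢
      by_cases hy : y = q
      · subst hy
        have := hmin x ((hmemU x).1 hx)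
        omega
      · exact (hmemU y).2 hy
    have horder : ∀ i j : Fin 2, i < j → ∀ x ∈ (![{q}, Finset.univ.erase q]) i,
        ∀ y ∈ (![{q}, Finset.univ.erase q]) j, chiRank χ x < chiRank χ y := by
      rw [Fin.forall_fin_two]
      constructor <;> rw [Fin.forall_fin_two] <;>
        refine ⟨fun hij => absurd hij (by decide), ?_⟩
      · intro _ x hx y hy
        simp only [Matrix.cons_val_zero, Finset.mem_singleton] at hx
        simp only [Matrix.cons_val_one, Matrix.head_cons, Matrix.cons_val_zero] at hy
        subst hx
        exact hmin y ((hmemU y).1 hy)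
      · intro hij
        exact absurd hij (by decide)
    have hfac2 := hFac n χ (delS q ⊤) Z hZ hBNCdel 2 ![{q}, Finset.univ.erase q]
      hcover hnei hblocks hints horder
    rw [finRange_two_prod] at hfac2
    simp only [Matrix.cons_val_zero, Matrix.cons_val_one, Matrix.head_cons] at hfac2
    rw [Eb_of_singleton P Eb hTop, E_Zq P hE1 hq, comap_delS_not_mem hqU, comap_top,
      hTop _ _ _, prod_rest, filter_mem_erase, filter_ne_split] at hfac2
    rw [hfac2, prod_split Z (finRange_split q), List.map_append, List.prod_append]
    rcases hq with ⟨hχq, hZq⟩ | ⟨hχq, hZq⟩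
    · -- left case: everything before q is right
      have hrt : ∀ k ∈ (List.finRange n).filter (fun k => k < q), χ k = false := by
        intro k hk
        have hklt := mem_filter_lt hk
        have h := hmin k hklt.ne
        rw [chiRank_lt_iff] at h
        rcases h with ⟨_, _, h⟩ | ⟨_, h, _⟩ | ⟨_, h⟩
        · exact absurd h (lt_asymm hklt)
        · exact h
        · exact h
      have hcomm := commute_L P hZ b hrt
      rw [hZq, ← hcomm.eq, mul_assoc, E_Lmul]
    · -- right case: everything other than q is a right, before q
      have hfacts : ∀ k : Fin n, k ≠ q → χ k = false ∧ k < q := by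
        intro k hk
        have h := hmin k hk
        rw [chiRank_lt_iff] at h
        rcases h with ⟨h1, _, _⟩ | ⟨_, h1, h2⟩ | ⟨h1, _⟩
        · rw [hχq] at h1; exact absurd h1 (by simp)
        · exact ⟨h1, h2⟩
        · rw [hχq] at h1; exact absurd h1 (by simp)
      have hF2 : (List.finRange n).filter (fun k => q < k) = [] := by
        rw [List.filter_eq_nil_iff]
        intro k hk hlt
        have hlt' : q < k := of_decide_eq_true hlt
        exact absurd (hfacts k hlt'.ne').2 (not_lt.2 (le_of_lt hlt'))
      rw [hF2]
      simp only [List.map_nil, List.prod_nil, mul_one]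
      rw [hZq, ← P.E_swap]
      have hrt : ∀ k ∈ (List.finRange n).filter (fun k => k < q), χ k = false :=
        fun k hk => (hfacts k (mem_filter_lt hk).ne).1
      have hcomm := commute_L P hZ b hrt
      rw [← hcomm.eq, E_Lmul]
  push_neg at hmin
  by_cases hmax : ∀ y : Fin n, y ≠ q → chiRank χ y < chiRank χ q
  · -- q is the ≺χ-maximum: factor as rest · {q}
    have hcover : ∀ k : Fin n,
        ∃! i : Fin 2, k ∈ (![Finset.univ.erase q, {q}] : Fin 2 → Finset (Fin n)) i := by
      intro k
      by_cases hk : k = q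
      · subst hk
        refine ⟨1, by simp, ?_⟩
        rw [Fin.forall_fin_two]
        refine ⟨fun hi => ?_, fun _ => rfl⟩
        simp only [Matrix.cons_val_zero] at hi
        exact absurd ((hmemU _).1 hi) (fun h => h rfl)
      · refine ⟨0, by simp [hmemU, hk], ?_⟩
        rw [Fin.forall_fin_two]
        refine ⟨fun _ => rfl, fun hi => ?_⟩
        simp only [Matrix.cons_val_one, Matrix.head_cons, Matrix.cons_val_zero, Finset.mem_singleton] at hi
        exact absurd hi hk
    have hnei : ∀ i : Fin 2,
        ((![Finset.univ.erase q, {q}] : Fin 2 → Finset (Fin n)) i).Nonempty := by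
      rw [Fin.forall_fin_two]
      exact ⟨hUne, ⟨q, Finset.mem_singleton_self q⟩⟩
    have hblocks : ∀ i : Fin 2,
        UnionOfBlocks (delS q (⊤ : Setoid (Fin n))) ((![Finset.univ.erase q, {q}]) i) := by
      rw [Fin.forall_fin_two]
      exact ⟨hblockU, hblockq⟩
    have hints : ∀ i : Fin 2, ChiInterval χ ((![Finset.univ.erase q, {q}]) i) := by
      rw [Fin.forall_fin_two]
      refine ⟨?_, hintq⟩
      intro x hx z hz y h1 h2
      simp only [Matrix.cons_val_zero] at hx hz ⊢
      by_cases hy : y = q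
      · subst hy
        have := hmax z ((hmemU z).1 hz)
        omega
      · exact (hmemU y).2 hy
    have horder : ∀ i j : Fin 2, i < j → ∀ x ∈ (![Finset.univ.erase q, {q}]) i,
        ∀ y ∈ (![Finset.univ.erase q, {q}]) j, chiRank χ x < chiRank χ y := by
      rw [Fin.forall_fin_two]
      constructor <;> rw [Fin.forall_fin_two] <;>
        refine ⟨fun hij => absurd hij (by decide), ?_⟩
      · intro _ x hx y hy
        simp only [Matrix.cons_val_zero] at hx
        simp only [Matrix.cons_val_one, Matrix.head_cons, Matrix.cons_val_zero, Finset.mem_singleton] at hy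
        subst hy
        exact hmax x ((hmemU x).1 hx)
      · intro hij
        exact absurd hij (by decide)
    have hfac2 := hFac n χ (delS q ⊤) Z hZ hBNCdel 2 ![Finset.univ.erase q, {q}]
      hcover hnei hblocks hints horder
    rw [finRange_two_prod] at hfac2
    simp only [Matrix.cons_val_zero, Matrix.cons_val_one, Matrix.head_cons] at hfac2
    rw [Eb_of_singleton P Eb hTop, E_Zq P hE1 hq, comap_delS_not_mem hqU, comap_top,
      hTop _ _ _, prod_rest, filter_mem_erase, filter_ne_split] at hfac2
    rw [hfac2, prod_split Z (finRange_split q), List.map_append, List.prod_append]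
    rcases hq with ⟨hχq, hZq⟩ | ⟨hχq, hZq⟩
    · -- left case: everything other than q is a left, before q
      have hfacts : ∀ k : Fin n, k ≠ q → χ k = true ∧ k < q := by
        intro k hk
        have h := hmax k hk
        rw [chiRank_lt_iff] at h
        rcases h with ⟨h1, _, h2⟩ | ⟨_, h1, _⟩ | ⟨_, h1⟩
        · exact ⟨h1, h2⟩
        · rw [hχq] at h1; exact absurd h1 (by simp)
        · rw [hχq] at h1; exact absurd h1 (by simp)
      have hF2 : (List.finRange n).filter (fun k => q < k) = [] := by
        rw [List.filter_eq_nil_iff]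
        intro k hk hlt
        have hlt' : q < k := of_decide_eq_true hlt
        exact absurd (hfacts k hlt'.ne').2 (not_lt.2 (le_of_lt hlt'))
      rw [hF2]
      simp only [List.map_nil, List.prod_nil, mul_one]
      rw [hZq, P.E_swap]
      have hlf : ∀ k ∈ (List.finRange n).filter (fun k => k < q), χ k = true :=
        fun k hk => (hfacts k (mem_filter_lt hk).ne).1
      have hcomm := commute_R P hZ b hlf
      rw [← hcomm.eq, E_Rmul]
    · -- right case: everything before q is a left
      have hlf : ∀ k ∈ (List.finRange n).filter (fun k => k < q), χ k = true := by
        intro k hk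
        have hklt := mem_filter_lt hk
        have h := hmax k hklt.ne
        rw [chiRank_lt_iff] at h
        rcases h with ⟨h1, _, _⟩ | ⟨_, _, h1⟩ | ⟨h1, _⟩
        · exact h1
        · exact absurd h1 (lt_asymm hklt)
        · exact h1
      have hcomm := commute_R P hZ b hlf
      rw [hZq, ← hcomm.eq, mul_assoc, E_Rmul]
  · -- q is neither the minimum nor the maximum: use the nesting property
    push_neg at hmax
    obtain ⟨y1, hy1ne, hy1n⟩ := hmin
    obtain ⟨y2, hy2ne, hy2n⟩ := hmax
    have hy1 : chiRank χ y1 < chiRank χ q := by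
      have hne : chiRank χ y1 ≠ chiRank χ q := fun h => hy1ne (chiRank_injective χ h)
      omega
    have hy2 : chiRank χ q < chiRank χ y2 := by
      have hne : chiRank χ y2 ≠ chiRank χ q := fun h => hy2ne (chiRank_injective χ h)
      omega
    obtain ⟨p, hpS, hpmax⟩ := Finset.exists_max_image
      ((Finset.univ.erase q).filter (fun w => chiRank χ w < chiRank χ q))
      (fun w => chiRank χ w)
      ⟨y1, Finset.mem_filter.2 ⟨(hmemU y1).2 hy1ne, hy1⟩⟩
    rw [Finset.mem_filter] at hpS
    obtain ⟨hpU, hplt⟩ := hpS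
    have hpne : p ≠ q := (hmemU p).1 hpU
    have hpmax' : ∀ w : Fin n, w ≠ q → chiRank χ w < chiRank χ q →
        chiRank χ w ≤ chiRank χ p :=
      fun w hw hlt => hpmax w (Finset.mem_filter.2 ⟨(hmemU w).2 hw, hlt⟩)
    have hnest2 := hNest n χ (delS q ⊤) Z hZ hBNCdel {q} (Finset.univ.erase q)
      ⟨q, Finset.mem_singleton_self q⟩ hUne
      (Finset.disjoint_singleton_left.2 hqU)
      (by
        apply Finset.eq_univ_iff_forall.2
        intro k
        by_cases hk : k = q
        · subst hk; exact Finset.mem_union_left _ (Finset.mem_singleton_self _)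
        · exact Finset.mem_union_right _ ((hmemU k).2 hk))
      hblockq hblockU hintq
      ⟨y2, (hmemU y2).2 hy2ne, fun v hv => by
        rw [Finset.mem_singleton] at hv; subst hv; exact hy2⟩
      p hpU
      (fun v hv => by rw [Finset.mem_singleton] at hv; subst hv; exact hplt)
      (fun w hw hwlt => hpmax' w ((hmemU w).1 hw) (hwlt q (Finset.mem_singleton_self q)))
    rw [Eb_of_singleton P Eb hTop, E_Zq P hE1 hq, comap_delS_not_mem hqU, comap_top,
      hTop _ _ _, prod_rest, filter_mem_erase] at hnest2
    rw [hnest2]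
    rcases hq with ⟨hχq, hZq⟩ | ⟨hχq, hZq⟩
    · -- Z q = L b; the predecessor p is a left with p < q
      have hcharp := hplt
      rw [chiRank_lt_iff] at hcharp
      rcases hcharp with ⟨hp1, -, hp2⟩ | ⟨-, hp2, -⟩ | ⟨-, hp2⟩
      rotate_left
      · rw [hχq] at hp2; exact absurd hp2 (by decide)
      · rw [hχq] at hp2; exact absurd hp2 (by decide)
      -- main: hp1 : χ p = true, hp2 : p < q
      have hmid : ∀ k : Fin n, p < k → k < q → χ k = false := by
        intro k h1 h2
        by_contra hk
        rw [Bool.not_eq_false] at hk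
        have hlt : chiRank χ k < chiRank χ q := by
          rw [chiRank_lt_iff]; exact Or.inl ⟨hk, hχq, h2⟩
        have hle := hpmax' k h2.ne hlt
        have hgt : chiRank χ p < chiRank χ k := by
          rw [chiRank_lt_iff]; exact Or.inl ⟨hp1, hk, h1⟩
        omega
      have hpmem : p ∈ (List.finRange n).filter (fun k => k < q) := by
        rw [List.mem_filter]
        exact ⟨List.mem_finRange p, by simpa using hp2⟩
      have hsplitq := sorted_split (l := (List.finRange n).filter (fun k => k < q))
        (List.Pairwise.filter _ finRange_sorted) hpmem
      have hsplitU : (List.finRange n).filter (fun k => k ≠ q) =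
          (((List.finRange n).filter (fun k => k < q)).filter (fun k => k < p)) ++
            p :: ((((List.finRange n).filter (fun k => k < q)).filter (fun k => p < k)) ++
              (List.finRange n).filter (fun k => q < k)) := by
        rw [filter_ne_split q]
        conv_lhs => rw [hsplitq]
        simp only [List.append_assoc, List.cons_append]
      have hpX : p ∉ (((List.finRange n).filter (fun k => k < q)).filter (fun k => k < p)) := by
        intro h; rw [List.mem_filter] at h
        exact absurd (of_decide_eq_true h.2) (lt_irrefl p)
      have hpY : p ∉ ((((List.finRange n).filter (fun k => k < q)).filter (fun k => p < k)) ++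
          (List.finRange n).filter (fun k => q < k)) := by
        intro h
        rcases List.mem_append.1 h with h | h
        · rw [List.mem_filter] at h
          exact absurd (of_decide_eq_true h.2) (lt_irrefl p)
        · exact absurd (mem_filter_gt h) (lt_asymm hp2)
      rw [prod_split _ hsplitU, map_update_of_not_mem _ hpX, map_update_of_not_mem _ hpY,
        Function.update_self, if_pos hp1, List.map_append, List.prod_append]
      rw [prod_split Z (finRange_split q), prod_split Z hsplitq, hZq]
      have hcommY : Commute (P.L b)
          (((((List.finRange n).filter (fun k => k < q)).filter (fun k => p < k)).map Z).prod) := by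
        apply commute_L P hZ b
        intro k hk
        have h1 : p < k := by rw [List.mem_filter] at hk; exact of_decide_eq_true hk.2
        have h2 : k < q := mem_filter_lt (List.mem_of_mem_filter hk)
        exact hmid k h1 h2
      simp only [mul_assoc]
      rw [slide_mid _ _ _ hcommY.eq]
    · -- Z q = R b
      have hcharp := hplt
      rw [chiRank_lt_iff] at hcharp
      rcases hcharp with ⟨-, hp2, -⟩ | ⟨hp1, -, hp2⟩ | ⟨hp1, -⟩
      · rw [hχq] at hp2; exact absurd hp2 (by decide)
      · -- R1 : χ p = false, q < p
        have hmid : ∀ k : Fin n, q < k → k < p → χ k = true := by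
          intro k h1 h2
          by_contra hk
          rw [Bool.not_eq_true] at hk
          have hlt : chiRank χ k < chiRank χ q := by
            rw [chiRank_lt_iff]; exact Or.inr (Or.inl ⟨hk, hχq, h1⟩)
          have hle := hpmax' k h1.ne' hlt
          have hgt : chiRank χ p < chiRank χ k := by
            rw [chiRank_lt_iff]; exact Or.inr (Or.inl ⟨hp1, hk, h2⟩)
          omega
        have hpmem : p ∈ (List.finRange n).filter (fun k => q < k) := by
          rw [List.mem_filter]
          exact ⟨List.mem_finRange p, by simpa using hp2⟩
        have hsplitq := sorted_split (l := (List.finRange n).filter (fun k => q < k))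
          (List.Pairwise.filter _ finRange_sorted) hpmem
        have hsplitU : (List.finRange n).filter (fun k => k ≠ q) =
            ((List.finRange n).filter (fun k => k < q) ++
              (((List.finRange n).filter (fun k => q < k)).filter (fun k => k < p))) ++
              p :: (((List.finRange n).filter (fun k => q < k)).filter (fun k => p < k)) := by
          rw [filter_ne_split q]
          conv_lhs => rw [hsplitq]
          simp only [List.append_assoc, List.cons_append]
        have hpX : p ∉ ((List.finRange n).filter (fun k => k < q) ++
            (((List.finRange n).filter (fun k => q < k)).filter (fun k => k < p))) := by
          intro h
          rcases List.mem_append.1 h with h | h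
          · exact absurd (mem_filter_lt h) (lt_asymm hp2)
          · rw [List.mem_filter] at h
            exact absurd (of_decide_eq_true h.2) (lt_irrefl p)
        have hpC : p ∉ (((List.finRange n).filter (fun k => q < k)).filter (fun k => p < k)) := by
          intro h; rw [List.mem_filter] at h
          exact absurd (of_decide_eq_true h.2) (lt_irrefl p)
        rw [prod_split _ hsplitU, map_update_of_not_mem _ hpX, map_update_of_not_mem _ hpC,
          Function.update_self, if_neg (by simp [hp1]), List.map_append, List.prod_append]
        rw [prod_split Z (finRange_split q), prod_split Z hsplitq, hZq]
        have hcommX : Commute (P.R (MulOpposite.op b))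
            (((((List.finRange n).filter (fun k => q < k)).filter (fun k => k < p)).map Z).prod) := by
          apply commute_R P hZ b
          intro k hk
          have h2 : k < p := by rw [List.mem_filter] at hk; exact of_decide_eq_true hk.2
          have h1 : q < k := mem_filter_gt (List.mem_of_mem_filter hk)
          exact hmid k h1 h2
        simp only [mul_assoc]
        rw [slide_mid _ _ _ hcommX.eq.symm]
      · -- R2 : χ p = true (p is the last left)
        have hleft : ∀ k : Fin n, q < k → χ k = true := by
          intro k h1
          by_contra hk
          rw [Bool.not_eq_true] at hk
          have hlt : chiRank χ k < chiRank χ q := by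
            rw [chiRank_lt_iff]; exact Or.inr (Or.inl ⟨hk, hχq, h1⟩)
          have hle := hpmax' k h1.ne' hlt
          have hgt : chiRank χ p < chiRank χ k := by
            rw [chiRank_lt_iff]; exact Or.inr (Or.inr ⟨hp1, hk⟩)
          omega
        have hafter : ∀ k : Fin n, p < k → k ≠ q → χ k = false := by
          intro k h1 h2
          by_contra hk
          rw [Bool.not_eq_false] at hk
          have hlt : chiRank χ k < chiRank χ q := by
            rw [chiRank_lt_iff]; exact Or.inr (Or.inr ⟨hk, hχq⟩)
          have hle := hpmax' k h2 hlt
          have hgt : chiRank χ p < chiRank χ k := by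
            rw [chiRank_lt_iff]; exact Or.inl ⟨hp1, hk, h1⟩
          omega
        have hcommD : Commute (P.R (MulOpposite.op b))
            ((((List.finRange n).filter (fun k => q < k)).map Z).prod) := by
          apply commute_R P hZ b
          intro k hk
          exact hleft k (mem_filter_gt hk)
        rw [prod_split Z (finRange_split q), hZq, mul_assoc, hcommD.eq, ← mul_assoc,
          ← P.E_swap, ← List.prod_append, ← List.map_append, ← filter_ne_split]
        have hpN : p ∈ (List.finRange n).filter (fun k => k ≠ q) := by
          rw [List.mem_filter]
          exact ⟨List.mem_finRange p, by simpa using hpne⟩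
        have hsplitN := sorted_split (l := (List.finRange n).filter (fun k => k ≠ q))
          (List.Pairwise.filter _ finRange_sorted) hpN
        have hpN1 : p ∉ (((List.finRange n).filter (fun k => k ≠ q)).filter (fun k => k < p)) := by
          intro h; rw [List.mem_filter] at h
          exact absurd (of_decide_eq_true h.2) (lt_irrefl p)
        have hpN2 : p ∉ (((List.finRange n).filter (fun k => k ≠ q)).filter (fun k => p < k)) := by
          intro h; rw [List.mem_filter] at h
          exact absurd (of_decide_eq_true h.2) (lt_irrefl p)
        have hcommN2 : Commute (P.L b)
            (((((List.finRange n).filter (fun k => k ≠ q)).filter (fun k => p < k)).map Z).prod) := by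
          apply commute_L P hZ b
          intro k hk
          have h1 : p < k := by rw [List.mem_filter] at hk; exact of_decide_eq_true hk.2
          have h2 : k ≠ q := by
            have := List.mem_of_mem_filter hk
            rw [List.mem_filter] at this
            exact of_decide_eq_true this.2
          exact hafter k h1 h2
        rw [prod_split Z hsplitN, prod_split _ hsplitN,
          map_update_of_not_mem _ hpN1, map_update_of_not_mem _ hpN2,
          Function.update_self, if_pos hp1]
        simp only [mul_assoc]
        rw [← hcommN2.eq]

end TopCase

section Absorb

variable {B : Type} [Ring B] [Algebra ℂ B] (P : BBNCPS B)

lemma unionOfBlocks_mono {n : ℕ} {σ' σ : Setoid (Fin n)} (h : σ' ≤ σ) {V : Finset (Fin n)}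
    (hV : UnionOfBlocks σ V) : UnionOfBlocks σ' V :=
  fun x hx y hxy => hV x hx y (Setoid.le_def.1 h hxy)

lemma unionOfBlocks_compl {n : ℕ} {σ : Setoid (Fin n)} {V : Finset (Fin n)}
    (hV : UnionOfBlocks σ V) : UnionOfBlocks σ Vᶜ := by
  intro x hx y hxy
  rw [Finset.mem_compl] at hx ⊢
  intro hy
  exact hx (hV y hy x (σ.iseqv.symm hxy))

lemma card_lt_of_not_mem {n : ℕ} {V : Finset (Fin n)} {x : Fin n} (hx : x ∉ V) :
    V.card < n := by
  have h1 : V ⊂ Finset.univ :=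
    (Finset.ssubset_iff_of_subset (Finset.subset_univ V)).2 ⟨x, Finset.mem_univ x, hx⟩
  have h2 := Finset.card_lt_card h1
  simpa using h2

lemma hq_rest {n : ℕ} {χ : Fin n → Bool} {Z : Fin n → P.A} {q : Fin n} {b : B}
    (hq : (χ q = true ∧ Z q = P.L b) ∨ (χ q = false ∧ Z q = P.R (MulOpposite.op b)))
    {V : Finset (Fin n)} {a : Fin V.card} (ha : restFin V a = q) :
    ((χ ∘ restFin V) a = true ∧ (Z ∘ restFin V) a = P.L b) ∨
      ((χ ∘ restFin V) a = false ∧ (Z ∘ restFin V) a = P.R (MulOpposite.op b)) := by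
  rcases hq with ⟨h1, h2⟩ | ⟨h1, h2⟩
  · exact Or.inl ⟨by rw [Function.comp_apply, ha]; exact h1,
      by rw [Function.comp_apply, ha]; exact h2⟩
  · exact Or.inr ⟨by rw [Function.comp_apply, ha]; exact h1,
      by rw [Function.comp_apply, ha]; exact h2⟩

lemma absorb (Eb : (n : ℕ) → (Fin n → Bool) → Setoid (Fin n) → (Fin n → P.A) → B)
    (hTop : AnchorsTop P Eb) (hFac : FactorsOverIntervals P Eb)
    (hNest : NestsOverIntervals P Eb) :
    ∀ (n : ℕ) (χ : Fin n → Bool) (Z : Fin n → P.A) (σ : Setoid (Fin n)) (q : Fin n) (b : B),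
      SideOK P χ Z → IsBNC χ σ →
      ((χ q = true ∧ Z q = P.L b) ∨ (χ q = false ∧ Z q = P.R (MulOpposite.op b))) →
      Eb n χ σ Z = Eb n χ (delS q σ) Z := by
  intro N
  induction N using Nat.strong_induction_on with
  | _ n IH =>
  intro χ Z σ q b hZ hσ hq
  by_cases hfix : delS q σ = σ
  · rw [hfix]
  by_cases htop : σ = ⊤
  · subst htop
    exact top_case P Eb hTop hFac hNest χ Z hZ q b hq
  -- main case: σ ≠ ⊤ — decompose and use the induction hypothesis
  have hneu : (Finset.univ : Finset (Fin n)).Nonempty := ⟨q, Finset.mem_univ q⟩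
  obtain ⟨x0, -, hx0⟩ := Finset.exists_min_image Finset.univ (chiRank χ) hneu
  obtain ⟨xm, -, hxm⟩ := Finset.exists_max_image Finset.univ (chiRank χ) hneu
  have hx0' : ∀ y : Fin n, chiRank χ x0 ≤ chiRank χ y := fun y => hx0 y (Finset.mem_univ y)
  have hxm' : ∀ y : Fin n, chiRank χ y ≤ chiRank χ xm := fun y => hxm y (Finset.mem_univ y)
  by_cases hcase : σ.r x0 xm
  · -- case (ii): use the nesting property with an inner gap of the block of x0
    obtain ⟨z, hz⟩ : ∃ z : Fin n, ¬ σ.r x0 z := by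
      by_contra h
      push_neg at h
      exact htop (Setoid.ext fun u v =>
        ⟨fun _ => setoid_top_rel u v, fun _ => σ.iseqv.trans (σ.iseqv.symm (h u)) (h v)⟩)
    have hzx0 : z ≠ x0 := fun h => hz (h ▸ σ.iseqv.refl x0)
    have hrank_z_x0 : chiRank χ x0 < chiRank χ z := by
      have hne2 : chiRank χ x0 ≠ chiRank χ z := fun h => hzx0 (chiRank_injective χ h).symm
      have := hx0' z
      omega
    have hrank_z_xm : chiRank χ z < chiRank χ xm := by
      have hzxm : z ≠ xm := fun h => hz (h ▸ hcase)
      have hne2 : chiRank χ z ≠ chiRank χ xm := fun h => hzxm (chiRank_injective χ h)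
      have := hxm' z
      omega
    obtain ⟨w1, hw1T, hw1max⟩ := Finset.exists_max_image
      ((Finset.univ.filter (fun x => σ.r x0 x)).filter (fun x => chiRank χ x < chiRank χ z))
      (fun x => chiRank χ x)
      ⟨x0, Finset.mem_filter.2 ⟨Finset.mem_filter.2 ⟨Finset.mem_univ _, σ.iseqv.refl x0⟩, hrank_z_x0⟩⟩
    obtain ⟨w2, hw2T, hw2min⟩ := Finset.exists_min_image
      ((Finset.univ.filter (fun x => σ.r x0 x)).filter (fun x => chiRank χ z < chiRank χ x))
      (fun x => chiRank χ x)
      ⟨xm, Finset.mem_filter.2 ⟨Finset.mem_filter.2 ⟨Finset.mem_univ _, hcase⟩, hrank_z_xm⟩⟩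
    rw [Finset.mem_filter, Finset.mem_filter] at hw1T hw2T
    obtain ⟨⟨-, hw1B⟩, hw1z⟩ := hw1T
    obtain ⟨⟨-, hw2B⟩, hw2z⟩ := hw2T
    have hw12 : σ.r w1 w2 := σ.iseqv.trans (σ.iseqv.symm hw1B) hw2B
    have hw1w2 : chiRank χ w1 < chiRank χ w2 := lt_trans hw1z hw2z
    -- V is the set of elements strictly between w1 and w2 in the χ-order
    set V : Finset (Fin n) :=
      Finset.univ.filter (fun y => chiRank χ w1 < chiRank χ y ∧ chiRank χ y < chiRank χ w2)
      with hV
    have hmemV : ∀ y : Fin n, y ∈ V ↔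
        chiRank χ w1 < chiRank χ y ∧ chiRank χ y < chiRank χ w2 := by
      intro y; simp [hV]
    -- no element of the block of x0 lies in V
    have hB0V : ∀ w : Fin n, σ.r x0 w → w ∉ V := by
      intro w hw hwV
      rw [hmemV] at hwV
      rcases lt_trichotomy (chiRank χ w) (chiRank χ z) with h | h | h
      · have := hw1max w (Finset.mem_filter.2 ⟨Finset.mem_filter.2 ⟨Finset.mem_univ _, hw⟩, h⟩)
        omega
      · exact hz (chiRank_injective χ h ▸ hw)
      · have := hw2min w (Finset.mem_filter.2 ⟨Finset.mem_filter.2 ⟨Finset.mem_univ _, hw⟩, h⟩)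
        omega
    have hzV : z ∈ V := (hmemV z).2 ⟨hw1z, hw2z⟩
    have hw1W : w1 ∈ Vᶜ := Finset.mem_compl.2 (hB0V w1 hw1B)
    have hw2W : w2 ∈ Vᶜ := Finset.mem_compl.2 (hB0V w2 hw2B)
    have hx0W : x0 ∈ Vᶜ := Finset.mem_compl.2 (hB0V x0 (σ.iseqv.refl x0))
    -- V is a union of blocks
    have hVblocks : UnionOfBlocks σ V := by
      intro x hx y hxy
      rw [hmemV] at hx
      rw [hmemV]
      by_contra hy
      have hxB : ¬ σ.r x0 x := fun h => hB0V x h ((hmemV x).2 hx)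
      rcases not_and_or.1 hy with hy1 | hy2
      · -- chiRank χ y ≤ chiRank χ w1
        push_neg at hy1
        rcases lt_or_eq_of_le hy1 with hy1 | hy1
        · -- strict: crossing pattern (y, w1, x, w2)
          have := hσ y w1 x w2 hy1 hx.1 hx.2 (σ.iseqv.symm hxy) hw12
          exact hxB (σ.iseqv.trans hw1B (σ.iseqv.trans (σ.iseqv.symm this) (σ.iseqv.symm hxy)))
        · have hyw1 : y = w1 := chiRank_injective χ hy1
          rw [hyw1] at hxy
          exact hxB (σ.iseqv.trans hw1B (σ.iseqv.symm hxy))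
      · push_neg at hy2
        rcases lt_or_eq_of_le hy2 with hy2 | hy2
        · -- strict: crossing pattern (w1, x, w2, y)
          have := hσ w1 x w2 y hx.1 hx.2 hy2 hw12 hxy
          exact hxB (σ.iseqv.trans hw1B this)
        · have hyw2 : w2 = y := chiRank_injective χ hy2
          rw [← hyw2] at hxy
          exact hxB (σ.iseqv.trans hw2B (σ.iseqv.symm hxy))
    have hWblocks : UnionOfBlocks σ Vᶜ := unionOfBlocks_compl hVblocks
    have hVint : ChiInterval χ V := by
      intro x hx z' hz' y h1 h2
      rw [hmemV] at hx hz'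
      rw [hmemV]
      exact ⟨lt_of_lt_of_le hx.1 h1, lt_of_le_of_lt h2 hz'.2⟩
    have hex : ∃ w ∈ Vᶜ, ∀ v ∈ V, chiRank χ v < chiRank χ w :=
      ⟨w2, hw2W, fun v hv => ((hmemV v).1 hv).2⟩
    have hp1 : ∀ v ∈ V, chiRank χ w1 < chiRank χ v := fun v hv => ((hmemV v).1 hv).1
    have hp2 : ∀ w ∈ Vᶜ, (∀ v ∈ V, chiRank χ w < chiRank χ v) → chiRank χ w ≤ chiRank χ w1 := by
      intro w hw hwlt
      by_contra hgt
      push_neg at hgt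
      have hwz : chiRank χ w < chiRank χ z := hwlt z hzV
      have : w ∈ V := (hmemV w).2 ⟨hgt, lt_trans hwz hw2z⟩
      exact (Finset.mem_compl.1 hw) this
    have hVne : V.Nonempty := ⟨z, hzV⟩
    have hWne : Vᶜ.Nonempty := ⟨x0, hx0W⟩
    have hcardV : V.card < n := card_lt_of_not_mem (hB0V x0 (σ.iseqv.refl x0))
    have hcardW : Vᶜ.card < n := card_lt_of_not_mem (Finset.notMem_compl.2 hzV)
    have hδ : IsBNC χ (delS q σ) := delS_isBNC hσ
    have hnestσ := hNest n χ σ Z hZ hσ V Vᶜ hVne hWne disjoint_compl_right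
      (Finset.union_compl V) hVblocks hWblocks hVint hex w1 hw1W hp1 hp2
    have hnestδ := hNest n χ (delS q σ) Z hZ hδ V Vᶜ hVne hWne disjoint_compl_right
      (Finset.union_compl V) (unionOfBlocks_mono delS_le hVblocks)
      (unionOfBlocks_mono delS_le hWblocks) hVint hex w1 hw1W hp1 hp2
    rw [hnestσ, hnestδ]
    by_cases hqV : q ∈ V
    · -- q lies in the inner interval
      have hqW : q ∉ Vᶜ := Finset.notMem_compl.2 hqV
      obtain ⟨a, ha⟩ := restFin_surj V hqV
      rw [comap_delS_not_mem hqW, comap_delS_mem ha,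
        ← IH V.card hcardV (χ ∘ restFin V) (Z ∘ restFin V) (Setoid.comap (restFin V) σ) a b
          (sideOK_rest P hZ V) (comap_isBNC hσ V) (hq_rest P hq ha)]
    · -- q lies in the outer part
      have hqW : q ∈ Vᶜ := Finset.mem_compl.2 hqV
      obtain ⟨a, ha⟩ := restFin_surj Vᶜ hqW
      rw [comap_delS_not_mem hqV, comap_delS_mem ha]
      -- inner values now agree; apply IH to the outer tuple
      set β := Eb V.card (χ ∘ restFin V) (Setoid.comap (restFin V) σ) (Z ∘ restFin V) with hβ
      set c : P.A := if χ w1 then Z w1 * P.L β else P.R (MulOpposite.op β) * Z w1 with hc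
      have hZ' : SideOK P χ (Function.update Z w1 c) := sideOK_update P hZ w1 β
      have hq' : ((χ ∘ restFin Vᶜ) a = true ∧
            (Function.update Z w1 c ∘ restFin Vᶜ) a = P.L (if q = w1 then b * β else b)) ∨
          ((χ ∘ restFin Vᶜ) a = false ∧
            (Function.update Z w1 c ∘ restFin Vᶜ) a =
              P.R (MulOpposite.op (if q = w1 then b * β else b))) := by
        by_cases hqw : q = w1
        · rw [if_pos hqw]
          subst hqw
          rcases hq with ⟨h1, h2⟩ | ⟨h1, h2⟩
          · refine Or.inl ⟨by rw [Function.comp_apply, ha]; exact h1, ?_⟩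
            rw [Function.comp_apply, ha, Function.update_self, hc, if_pos h1, h2, ← map_mul]
          · refine Or.inr ⟨by rw [Function.comp_apply, ha]; exact h1, ?_⟩
            rw [Function.comp_apply, ha, Function.update_self, hc, if_neg (by simp [h1]), h2,
              ← map_mul]
            rfl
        · have : (Function.update Z w1 c ∘ restFin Vᶜ) a = Z q := by
            rw [Function.comp_apply, ha, Function.update_of_ne hqw]
          rw [if_neg hqw]
          rcases hq with ⟨h1, h2⟩ | ⟨h1, h2⟩
          · exact Or.inl ⟨by rw [Function.comp_apply, ha]; exact h1, by rw [this]; exact h2⟩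
          · exact Or.inr ⟨by rw [Function.comp_apply, ha]; exact h1, by rw [this]; exact h2⟩
      exact IH Vᶜ.card hcardW (χ ∘ restFin Vᶜ) (Function.update Z w1 c ∘ restFin Vᶜ)
        (Setoid.comap (restFin Vᶜ) σ) a (if q = w1 then b * β else b)
        (sideOK_rest P hZ' Vᶜ) (comap_isBNC hσ Vᶜ) hq'
  · -- case (i): the block of x0 does not reach the χ-maximum; factor into two intervals
    set S0 : Finset ℕ := (Finset.univ.filter (fun x => σ.r x0 x)).image (chiRank χ) with hS0
    have hS0ne : S0.Nonempty :=
      ⟨chiRank χ x0, Finset.mem_image_of_mem _ (Finset.mem_filter.2 ⟨Finset.mem_univ _, σ.iseqv.refl x0⟩)⟩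
    set k : ℕ := S0.max' hS0ne with hk
    obtain ⟨w, hwmem, hwk⟩ := Finset.mem_image.1 (S0.max'_mem hS0ne)
    rw [Finset.mem_filter] at hwmem
    have hwB : σ.r x0 w := hwmem.2
    have hkmax : ∀ x : Fin n, σ.r x0 x → chiRank χ x ≤ k :=
      fun x hx => S0.le_max' _ (Finset.mem_image_of_mem _
        (Finset.mem_filter.2 ⟨Finset.mem_univ _, hx⟩))
    rw [← hk] at hwk
    have hkxm : k < chiRank χ xm := by
      have h1 : chiRank χ w ≤ chiRank χ xm := hxm' w
      have h2 : chiRank χ w ≠ chiRank χ xm := by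
        intro h
        have hwxm : w = xm := chiRank_injective χ h
        rw [hwxm] at hwB
        exact hcase hwB
      omega
    set V1 : Finset (Fin n) := Finset.univ.filter (fun x => chiRank χ x ≤ k) with hV1
    have hmemV1 : ∀ x : Fin n, x ∈ V1 ↔ chiRank χ x ≤ k := by intro x; simp [hV1]
    have hmemV2 : ∀ x : Fin n, x ∈ V1ᶜ ↔ k < chiRank χ x := by
      intro x; rw [Finset.mem_compl, hmemV1]; omega
    have hx0V1 : x0 ∈ V1 := (hmemV1 x0).2 (hkmax x0 (σ.iseqv.refl x0))
    have hxmV2 : xm ∈ V1ᶜ := (hmemV2 xm).2 hkxm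
    have hV1blocks : UnionOfBlocks σ V1 := by
      intro x hx y hxy
      rw [hmemV1] at hx
      rw [hmemV1]
      by_contra hy
      push_neg at hy
      by_cases hxB : σ.r x0 x
      · exact absurd (hkmax y (σ.iseqv.trans hxB hxy)) (by omega)
      · -- crossing pattern (x0, x, w, y)
        have h1 : chiRank χ x0 < chiRank χ x := by
          have hne2 : chiRank χ x0 ≠ chiRank χ x :=
            fun h => hxB (chiRank_injective χ h ▸ σ.iseqv.refl x0)
          have := hx0' x
          omega
        have h2 : chiRank χ x < chiRank χ w := by
          have hne2 : chiRank χ x ≠ chiRank χ w := by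
            intro h
            have hxw : x = w := chiRank_injective χ h
            rw [hxw] at hxB
            exact hxB hwB
          omega
        have h3 : chiRank χ w < chiRank χ y := by omega
        have := hσ x0 x w y h1 h2 h3 hwB hxy
        exact hxB this
    have hV2blocks : UnionOfBlocks σ V1ᶜ := unionOfBlocks_compl hV1blocks
    have hV1int : ChiInterval χ V1 := by
      intro x hx z hz y h1 h2
      rw [hmemV1] at hz
      rw [hmemV1]
      omega
    have hV2int : ChiInterval χ V1ᶜ := by
      intro x hx z hz y h1 h2
      rw [hmemV2] at hx
      rw [hmemV2]
      omega
    have hcover : ∀ j : Fin n, ∃! i : Fin 2, j ∈ (![V1, V1ᶜ] : Fin 2 → Finset (Fin n)) i := by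
      intro j
      by_cases hj : j ∈ V1
      · refine ⟨0, hj, ?_⟩
        rw [Fin.forall_fin_two]
        refine ⟨fun _ => rfl, fun hji => ?_⟩
        simp only [Matrix.cons_val_one, Matrix.head_cons, Matrix.cons_val_zero, Finset.mem_compl] at hji
        exact absurd hj hji
      · refine ⟨1, by simpa using hj, ?_⟩
        rw [Fin.forall_fin_two]
        refine ⟨fun hji => ?_, fun _ => rfl⟩
        simp only [Matrix.cons_val_zero] at hji
        exact absurd hji hj
    have hnei : ∀ i : Fin 2, ((![V1, V1ᶜ] : Fin 2 → Finset (Fin n)) i).Nonempty := by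
      rw [Fin.forall_fin_two]
      exact ⟨⟨x0, hx0V1⟩, ⟨xm, hxmV2⟩⟩
    have hints : ∀ i : Fin 2, ChiInterval χ ((![V1, V1ᶜ]) i) := by
      rw [Fin.forall_fin_two]
      exact ⟨hV1int, hV2int⟩
    have horder : ∀ i j : Fin 2, i < j → ∀ x ∈ (![V1, V1ᶜ]) i, ∀ y ∈ (![V1, V1ᶜ]) j,
        chiRank χ x < chiRank χ y := by
      rw [Fin.forall_fin_two]
      constructor <;> rw [Fin.forall_fin_two] <;>
        refine ⟨fun hij => absurd hij (by decide), ?_⟩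
      · intro _ x hx y hy
        simp only [Matrix.cons_val_zero] at hx
        simp only [Matrix.cons_val_one, Matrix.head_cons, Matrix.cons_val_zero] at hy
        rw [hmemV1] at hx
        rw [hmemV2] at hy
        omega
      · intro hij
        exact absurd hij (by decide)
    have hδ : IsBNC χ (delS q σ) := delS_isBNC hσ
    have hfacσ := hFac n χ σ Z hZ hσ 2 ![V1, V1ᶜ] hcover hnei
      (by rw [Fin.forall_fin_two]; exact ⟨hV1blocks, hV2blocks⟩) hints horder
    have hblocksδ : ∀ i : Fin 2, UnionOfBlocks (delS q σ) ((![V1, V1ᶜ]) i) := by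
      rw [Fin.forall_fin_two]
      exact ⟨unionOfBlocks_mono delS_le hV1blocks, unionOfBlocks_mono delS_le hV2blocks⟩
    have hfacδ := hFac n χ (delS q σ) Z hZ hδ 2 ![V1, V1ᶜ] hcover hnei hblocksδ hints horder
    rw [finRange_two_prod] at hfacσ hfacδ
    simp only [Matrix.cons_val_zero, Matrix.cons_val_one, Matrix.head_cons] at hfacσ hfacδ
    rw [hfacσ, hfacδ]
    have hcard1 : V1.card < n := card_lt_of_not_mem (Finset.mem_compl.1 hxmV2)
    have hcard2 : V1ᶜ.card < n := card_lt_of_not_mem (Finset.notMem_compl.2 hx0V1)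
    by_cases hqV : q ∈ V1
    · have hqV2 : q ∉ V1ᶜ := Finset.notMem_compl.2 hqV
      obtain ⟨a, ha⟩ := restFin_surj V1 hqV
      rw [comap_delS_not_mem hqV2, comap_delS_mem ha,
        ← IH V1.card hcard1 (χ ∘ restFin V1) (Z ∘ restFin V1) (Setoid.comap (restFin V1) σ) a b
          (sideOK_rest P hZ V1) (comap_isBNC hσ V1) (hq_rest P hq ha)]
    · have hqV2 : q ∈ V1ᶜ := Finset.mem_compl.2 hqV
      obtain ⟨a, ha⟩ := restFin_surj V1ᶜ hqV2
      rw [comap_delS_not_mem hqV, comap_delS_mem ha,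
        ← IH V1ᶜ.card hcard2 (χ ∘ restFin V1ᶜ) (Z ∘ restFin V1ᶜ)
          (Setoid.comap (restFin V1ᶜ) σ) a b
          (sideOK_rest P hZ V1ᶜ) (comap_isBNC hσ V1ᶜ) (hq_rest P hq ha)]

end Absorb


/-- Let `(A, E, ε)` be a `B`-`B`-non-commutative probability space and
let `χ : {1,…,n} → {ℓ,r}` with `n ≥ 2`.  If there exist `q` and `b ∈ B` such that
`Z_q = L_b` when `χ(q) = ℓ`, or `Z_q = R_b` when `χ(q) = r`, then the full operator-valued
bi-free cumulant vanishes: `κ^B_χ(Z₁,…,Z_n) = 0` for all `Z_k ∈ A_{χ(k)}`.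

Here the cumulant is `κ^B_χ(Z) = Σ_{σ ∈ BNC(χ)} μ_BNC(σ, 1_χ) E^B_σ(Z)`, where `E^B` is
the bi-multiplicative operator-valued bi-free moment function (hypothesized via its
characterizing properties `AnchorsTop`, `FactorsOverIntervals`, `NestsOverIntervals`) and
`μ` is the bi-non-crossing Möbius function (hypothesized via `MoebiusBNC`). -/
theorem stmt18 (P : BBNCPS B)
    (Eb : (n : ℕ) → (Fin n → Bool) → Setoid (Fin n) → (Fin n → P.A) → B)
    (μ : (n : ℕ) → (Fin n → Bool) → Setoid (Fin n) → Setoid (Fin n) → ℂ)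
    (hTop : AnchorsTop P Eb) (hFac : FactorsOverIntervals P Eb)
    (hNest : NestsOverIntervals P Eb) (hμ : MoebiusBNC μ)
    (n : ℕ) (hn : 2 ≤ n) (χ : Fin n → Bool) (Z : Fin n → P.A)
    (hZ : SideOK P χ Z) (q : Fin n) (b : B)
    (hq : (χ q = true ∧ Z q = P.L b) ∨
          (χ q = false ∧ Z q = P.R (MulOpposite.op b))) :
    (∑ᶠ σ ∈ {σ : Setoid (Fin n) | IsBNC χ σ}, μ n χ σ ⊤ • Eb n χ σ Z) = 0 := by
  classical
  set A : Finset (Setoid (Fin n)) := Finset.univ.filter (fun σ => IsBNC χ σ) with hA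
  have hmemA : ∀ σ : Setoid (Fin n), σ ∈ A ↔ IsBNC χ σ := by
    intro σ; simp [hA]
  have hsetA : {σ : Setoid (Fin n) | IsBNC χ σ} = (↑A : Set (Setoid (Fin n))) := by
    ext σ; simp [hmemA σ]
  rw [hsetA, finsum_mem_coe_finset]
  -- the Möbius recursion in Finset form
  have hrec : ∀ τ : Setoid (Fin n), IsBNC χ τ →
      (∑ σ ∈ A.filter (fun σ' => τ ≤ σ'), μ n χ σ ⊤) = (if τ = ⊤ then 1 else 0) := by
    intro τ hτ
    have h := hμ.2.1 n χ τ ⊤ hτ isBNC_top le_top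
    have hset : {τ' : Setoid (Fin n) | IsBNC χ τ' ∧ τ ≤ τ' ∧ τ' ≤ ⊤} =
        (↑(A.filter (fun σ' => τ ≤ σ')) : Set (Setoid (Fin n))) := by
      ext σ
      simp [hmemA σ, le_top, and_assoc]
    rw [hset, finsum_mem_coe_finset] at h
    exact h
  -- key combinatorial vanishing
  have hkey : ∀ τ : Setoid (Fin n), delS q τ = τ →
      (∑ σ ∈ A.filter (fun σ' => delS q σ' = τ), μ n χ σ ⊤) = 0 := by
    intro τ0
    refine IsWellFounded.induction (fun a b : Setoid (Fin n) => a > b)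
      (motive := fun τ => delS q τ = τ →
        (∑ σ ∈ A.filter (fun σ' => delS q σ' = τ), μ n χ σ ⊤) = 0) τ0 ?_
    intro τ IH2 hfixτ
    by_cases hτbnc : IsBNC χ τ
    · have hτne : τ ≠ ⊤ := by
        intro h
        rw [h] at hfixτ
        exact delS_top_ne_top q hn hfixτ
      have h1 : (∑ σ ∈ A.filter (fun σ' => τ ≤ σ'), μ n χ σ ⊤) = 0 := by
        rw [hrec τ hτbnc, if_neg hτne]
      have hsplit := Finset.sum_filter_add_sum_filter_not (A.filter (fun σ' => τ ≤ σ'))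
        (fun σ' => delS q σ' = τ) (fun σ => μ n χ σ ⊤)
      have heq1 : (A.filter (fun σ' => τ ≤ σ')).filter (fun σ' => delS q σ' = τ) =
          A.filter (fun σ' => delS q σ' = τ) := by
        ext σ
        simp only [Finset.mem_filter]
        constructor
        · rintro ⟨⟨h1', _⟩, h3⟩; exact ⟨h1', h3⟩
        · rintro ⟨h1', h2'⟩
          exact ⟨⟨h1', h2' ▸ delS_le⟩, h2'⟩
      have heq0 : (∑ σ ∈ (A.filter (fun σ' => τ ≤ σ')).filter
          (fun σ' => ¬ delS q σ' = τ), μ n χ σ ⊤) = 0 := by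
        set s' := (A.filter (fun σ' => τ ≤ σ')).filter (fun σ' => ¬ delS q σ' = τ) with hs'
        have hmaps : ∀ σ ∈ s', delS q σ ∈ s'.image (delS q) :=
          fun σ hσ => Finset.mem_image_of_mem _ hσ
        rw [← Finset.sum_fiberwise_of_maps_to hmaps (fun σ => μ n χ σ ⊤)]
        apply Finset.sum_eq_zero
        intro τ' hτ'
        obtain ⟨σ0, hσ0, hσ0τ'⟩ := Finset.mem_image.1 hτ'
        rw [hs', Finset.mem_filter, Finset.mem_filter] at hσ0
        obtain ⟨⟨hσ0A, hσ0le⟩, hσ0ne⟩ := hσ0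
        have hτ'fix : delS q τ' = τ' := by rw [← hσ0τ', delS_idem]
        have hττ' : τ ≤ τ' := by
          rw [← hσ0τ']
          exact (delS_fixed_le_iff hfixτ).1 hσ0le
        have hτ'gt : τ' > τ := lt_of_le_of_ne hττ' (fun h => hσ0ne (hσ0τ' ▸ h.symm))
        have hfib : s'.filter (fun σ' => delS q σ' = τ') =
            A.filter (fun σ' => delS q σ' = τ') := by
          ext σ
          rw [hs']
          simp only [Finset.mem_filter]
          constructor
          · rintro ⟨⟨⟨h1', _⟩, _⟩, h4⟩; exact ⟨h1', h4⟩
          · rintro ⟨h1', h2'⟩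
            refine ⟨⟨⟨h1', ?_⟩, ?_⟩, h2'⟩
            · have hle : τ ≤ delS q σ := by rw [h2']; exact hττ'
              exact le_trans hle delS_le
            · rw [h2']
              exact ne_of_gt hτ'gt
        rw [hfib]
        exact IH2 τ' hτ'gt hτ'fix
      rw [heq1] at hsplit
      rw [← hsplit, heq0, add_zero] at h1
      exact h1
    · have hempty : A.filter (fun σ' => delS q σ' = τ) = ∅ := by
        rw [Finset.filter_eq_empty_iff]
        intro σ hσA hdel
        rw [hmemA] at hσA
        exact hτbnc (hdel ▸ delS_isBNC hσA)
      rw [hempty, Finset.sum_empty]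
  -- assemble
  have habs : ∀ σ ∈ A, Eb n χ σ Z = Eb n χ (delS q σ) Z := by
    intro σ hσ
    exact absorb P Eb hTop hFac hNest n χ Z σ q b hZ ((hmemA σ).1 hσ) hq
  calc (∑ σ ∈ A, μ n χ σ ⊤ • Eb n χ σ Z)
      = ∑ σ ∈ A, μ n χ σ ⊤ • Eb n χ (delS q σ) Z :=
        Finset.sum_congr rfl (fun σ hσ => by rw [habs σ hσ])
    _ = ∑ τ ∈ A.image (delS q), ∑ σ ∈ A.filter (fun σ' => delS q σ' = τ),
          μ n χ σ ⊤ • Eb n χ (delS q σ) Z :=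
        (Finset.sum_fiberwise_of_maps_to (fun σ hσ => Finset.mem_image_of_mem _ hσ) _).symm
    _ = 0 := by
      apply Finset.sum_eq_zero
      intro τ hτ
      obtain ⟨σ0, hσ0A, hσ0τ⟩ := Finset.mem_image.1 hτ
      have hstep : (∑ σ ∈ A.filter (fun σ' => delS q σ' = τ),
            μ n χ σ ⊤ • Eb n χ (delS q σ) Z)
          = (∑ σ ∈ A.filter (fun σ' => delS q σ' = τ), μ n χ σ ⊤) • Eb n χ τ Z := by
        rw [Finset.sum_smul]
        apply Finset.sum_congr rfl
        intro σ hσ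
        rw [Finset.mem_filter] at hσ
        rw [hσ.2]
      rw [hstep, hkey τ (by rw [← hσ0τ, delS_idem]), zero_smul]

end
end

section
/- Let f and g be B-valued formal power series near 0 in a Banach algebra B with f(b) = Σ_{n≥1} E((L_b X)ⁿ) (the moment series Ψ) and suppose Φ(b) = Σ_{n≥1} κ_n(L_bX,…,L_bX) (the cumulant series) satisfies the moment-cumulant relation Ψ(b) = Φ((1+Ψ(b))·b) for b near 0, with E(X) invertible. Then the compositional inverses near 0 satisfy Φ^{⟨-1⟩}(b) = (1+b)·Ψ^{⟨-1⟩}(b); consequently the two definitions of the left operator-valued S-transform, S(b) = b⁻¹Φ^{⟨-1⟩}(b) and S(b) = (1+b)b⁻¹Ψ^{⟨-1⟩}(b), coincide on a neighborhood of 0. -/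
/-- Let `Ψ` (the moment series `Ψ(b) = Σ_{n≥1} E((L_b X)ⁿ)`) and `Φ`
(the cumulant series) be `B`-valued analytic functions near `0` in a Banach algebra `B`,
vanishing at `0`, with Fréchet derivative at `0` equal to `c ↦ c·E(X)` where `x = E(X)` is
invertible, and suppose the moment–cumulant relation `Ψ(b) = Φ((1+Ψ(b))·b)` holds for `b`
near `0`.  Let `ΨInv` and `ΦInv` be the local compositional inverses of `Ψ` and `Φ` near
`0`.  Then `Φ^{⟨-1⟩}(b) = (1+b)·Ψ^{⟨-1⟩}(b)` near `0`; consequently the two definitions of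
the left operator-valued `S`-transform, `S(b) = b⁻¹Φ^{⟨-1⟩}(b)` and
`S(b) = (1+b)b⁻¹Ψ^{⟨-1⟩}(b)`, coincide on a neighborhood of `0`. -/
theorem stmt19 {B : Type} [NormedRing B] [NormedAlgebra ℂ B] [CompleteSpace B]
    (Ψ Φ ΨInv ΦInv : B → B) (x : Bˣ)
    (hΨa : AnalyticAt ℂ Ψ 0) (hΦa : AnalyticAt ℂ Φ 0)
    (hΨ0 : Ψ 0 = 0) (hΦ0 : Φ 0 = 0)
    (fΨ fΦ : B →L[ℂ] B)
    (hfΨ : ∀ c : B, fΨ c = c * (x : B)) (hfΦ : ∀ c : B, fΦ c = c * (x : B))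
    (hdΨ : HasFDerivAt Ψ fΨ 0) (hdΦ : HasFDerivAt Φ fΦ 0)
    (hΨInv0 : ΨInv 0 = 0) (hΦInv0 : ΦInv 0 = 0)
    (hΨInvC : ContinuousAt ΨInv 0) (hΦInvC : ContinuousAt ΦInv 0)
    (hΨl : ∀ᶠ b in nhds (0 : B), Ψ (ΨInv b) = b)
    (hΨr : ∀ᶠ b in nhds (0 : B), ΨInv (Ψ b) = b)
    (hΦl : ∀ᶠ b in nhds (0 : B), Φ (ΦInv b) = b)
    (hΦr : ∀ᶠ b in nhds (0 : B), ΦInv (Φ b) = b)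
    (heq : ∀ᶠ b in nhds (0 : B), Ψ b = Φ ((1 + Ψ b) * b)) :
    ∀ᶠ b in nhds (0 : B), ΦInv b = (1 + b) * ΨInv b := by
  have htΨ : Filter.Tendsto ΨInv (nhds 0) (nhds (0 : B)) := by
    simpa [hΨInv0] using hΨInvC.tendsto
  have htg : Filter.Tendsto (fun b => (1 + b) * ΨInv b) (nhds 0) (nhds (0 : B)) := by
    have : ContinuousAt (fun b => (1 + b) * ΨInv b) 0 :=
      (continuousAt_const.add continuousAt_id).mul hΨInvC
    simpa [hΨInv0] using this.tendsto
  have h1 : ∀ᶠ b in nhds (0 : B),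
      ΦInv (Φ ((1 + b) * ΨInv b)) = (1 + b) * ΨInv b := htg.eventually hΦr
  have h2 : ∀ᶠ b in nhds (0 : B),
      Ψ (ΨInv b) = Φ ((1 + Ψ (ΨInv b)) * ΨInv b) := htΨ.eventually heq
  filter_upwards [h1, h2, hΨl] with b h1 h2 hl
  rw [hl] at h2
  conv_lhs => rw [h2]
  exact h1
end
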